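/- Let F ∈ {ℝ, ℂ} and let A, B ∈ F^{n×n}. If B has rank less than r and the number of entries where A and B differ is at most εn², then the number of nonsingular r×r submatrices of A is at most r²ε · binom(n,r)². -/

import Mathlib

open Finset

lemma rank_submatrix_le' {R : Type*} [Field R] {m l o : Type*} [Fintype m] [Fintype l] [Fintype o]
    [DecidableEq m] (B : Matrix m m R) (f : l → m) (g : o → m) :
    (B.submatrix f g).rank ≤ B.rank := by
  have h1 : ((1 : Matrix m m R).submatrix f (Equiv.refl m)) * B = B.submatrix f id := by
    rw [Matrix.one_submatrix_mul]; simp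
  have h2 : (B.submatrix f id) * ((1 : Matrix m m R).submatrix (Equiv.refl m) g)
      = B.submatrix f g := by
    rw [Matrix.mul_submatrix_one]; simp [Matrix.submatrix_submatrix]
  calc (B.submatrix f g).rank
      = ((B.submatrix f id) * ((1 : Matrix m m R).submatrix (Equiv.refl m) g)).rank := by rw [h2]
    _ ≤ (B.submatrix f id).rank := Matrix.rank_mul_le_left _ _
    _ = (((1 : Matrix m m R).submatrix f (Equiv.refl m)) * B).rank := by rw [h1]
    _ ≤ B.rank := Matrix.rank_mul_le_right _ _

lemma count_mem_powersetCard (n r : ℕ) (hr : 1 ≤ r) (i : Fin n) :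
    (((Finset.univ : Finset (Fin n)).powersetCard r).filter (fun S => i ∈ S)).card
      = (n-1).choose (r-1) := by
  have : (((Finset.univ : Finset (Fin n)).powersetCard r).filter (fun S => i ∈ S)).card
      = (((Finset.univ : Finset (Fin n)).erase i).powersetCard (r-1)).card := by
    apply Finset.card_nbij' (fun S => S.erase i) (fun T => insert i T)
    · intro S hS
      simp only [Finset.mem_coe, mem_filter, Finset.mem_powersetCard] at hS
      simp only [Finset.mem_coe, Finset.mem_powersetCard]
      exact ⟨Finset.erase_subset_erase i hS.1.1, by rw [Finset.card_erase_of_mem hS.2, hS.1.2]⟩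
    · intro T hT
      simp only [Finset.mem_coe, Finset.mem_powersetCard] at hT
      have hiT : i ∉ T := fun h => Finset.notMem_erase i _ (hT.1 h)
      simp only [Finset.mem_coe, mem_filter, Finset.mem_powersetCard]
      refine ⟨⟨Finset.subset_univ _, ?_⟩, Finset.mem_insert_self _ _⟩
      rw [Finset.card_insert_of_notMem hiT, hT.2]
      omega
    · intro S hS
      simp only [Finset.mem_coe, mem_filter] at hS
      exact Finset.insert_erase hS.2
    · intro T hT
      simp only [Finset.mem_coe, Finset.mem_powersetCard] at hT
      exact Finset.erase_insert (fun h => Finset.notMem_erase i _ (hT.1 h))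
  rw [this, Finset.card_powersetCard, Finset.card_erase_of_mem (Finset.mem_univ i),
    Finset.card_univ, Fintype.card_fin]

open scoped Classical in
/-- Let `F ∈ {ℝ, ℂ}` (formalised via `RCLike`) and `A, B ∈ F^{n×n}`.
If `B` has rank less than `r` and the number of entries where `A` and `B` differ is at most
`εn²`, then the number of nonsingular `r×r` submatrices of `A` (given by a choice of `r` rows
and `r` columns; nonsingular means full rank `r`) is at most `r²ε · binom(n,r)²`. -/
theorem stmt3 (F : Type*) [RCLike F] (n r : ℕ) (hr : 1 ≤ r) (hrn : r ≤ n) (ε : ℝ)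
    (A B : Matrix (Fin n) (Fin n) F)
    (hB : B.rank < r)
    (hdiff : (((Finset.univ : Finset (Fin n × Fin n)).filter
        (fun p => A p.1 p.2 ≠ B p.1 p.2)).card : ℝ) ≤ ε * n ^ 2) :
    ((((Finset.univ : Finset (Fin n)).powersetCard r ×ˢ
        (Finset.univ : Finset (Fin n)).powersetCard r).filter
      (fun st => (A.submatrix (fun i : {x // x ∈ st.1} => i.1)
          (fun j : {x // x ∈ st.2} => j.1)).rank = r)).card : ℝ)
      ≤ r ^ 2 * ε * (n.choose r) ^ 2 := by
  set D := (Finset.univ : Finset (Fin n × Fin n)).filter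
      (fun p => A p.1 p.2 ≠ B p.1 p.2) with hD
  set X := (((Finset.univ : Finset (Fin n)).powersetCard r ×ˢ
        (Finset.univ : Finset (Fin n)).powersetCard r).filter
      (fun st => (A.submatrix (fun i : {x // x ∈ st.1} => i.1)
          (fun j : {x // x ∈ st.2} => j.1)).rank = r)) with hX
  -- each element of X contains a differing entry
  have key : ∀ st ∈ X, ∃ p ∈ D, p.1 ∈ st.1 ∧ p.2 ∈ st.2 := by
    intro st hst
    by_contra h
    push_neg at h
    have hag : ∀ i ∈ st.1, ∀ j ∈ st.2, A i j = B i j := by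
      intro i hi j hj
      by_contra hne
      exact (h (i, j) (by simp [hD, hne])) hi hj
    simp only [hX, mem_filter] at hst
    have heq : (A.submatrix (fun i : {x // x ∈ st.1} => i.1)
          (fun j : {x // x ∈ st.2} => j.1))
        = (B.submatrix (fun i : {x // x ∈ st.1} => i.1)
          (fun j : {x // x ∈ st.2} => j.1)) := by
      ext i j
      exact hag i.1 i.2 j.1 j.2
    have := heq ▸ hst.2
    have hle := rank_submatrix_le' B (fun i : {x // x ∈ st.1} => i.1)
        (fun j : {x // x ∈ st.2} => j.1)
    omega
  -- cover X
  have hsub : X ⊆ D.biUnion (fun p =>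
      ((Finset.univ : Finset (Fin n)).powersetCard r ×ˢ
        (Finset.univ : Finset (Fin n)).powersetCard r).filter
        (fun st => p.1 ∈ st.1 ∧ p.2 ∈ st.2)) := by
    intro st hst
    obtain ⟨p, hp, h1, h2⟩ := key st hst
    simp only [Finset.mem_biUnion]
    refine ⟨p, hp, ?_⟩
    simp only [mem_filter]
    exact ⟨(Finset.mem_filter.1 hst).1, h1, h2⟩
  have hcount : ∀ p : Fin n × Fin n,
      (((Finset.univ : Finset (Fin n)).powersetCard r ×ˢ
        (Finset.univ : Finset (Fin n)).powersetCard r).filter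
        (fun st => p.1 ∈ st.1 ∧ p.2 ∈ st.2)).card = (n-1).choose (r-1) ^ 2 := by
    intro p
    rw [Finset.filter_product (fun s => p.1 ∈ s) (fun t => p.2 ∈ t), Finset.card_product,
      count_mem_powersetCard n r hr, count_mem_powersetCard n r hr, sq]
  have hcard : X.card ≤ D.card * (n-1).choose (r-1) ^ 2 := by
    calc X.card ≤ _ := Finset.card_le_card hsub
      _ ≤ ∑ p ∈ D, (((Finset.univ : Finset (Fin n)).powersetCard r ×ˢ
        (Finset.univ : Finset (Fin n)).powersetCard r).filter
        (fun st => p.1 ∈ st.1 ∧ p.2 ∈ st.2)).card := Finset.card_biUnion_le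
      _ = D.card * (n-1).choose (r-1) ^ 2 := by
          rw [Finset.sum_congr rfl (fun p _ => hcount p), Finset.sum_const, smul_eq_mul]
  -- arithmetic
  have hnc : n * (n-1).choose (r-1) = n.choose r * r := by
    have h1 : n - 1 + 1 = n := by omega
    have h2 : r - 1 + 1 = r := by omega
    have := Nat.add_one_mul_choose_eq (n-1) (r-1)
    simpa only [Nat.succ_eq_add_one, h1, h2] using this
  have hncR : (n : ℝ) * (n-1).choose (r-1) = n.choose r * r := by
    exact_mod_cast hnc
  have hC1 : (0 : ℝ) ≤ ((n-1).choose (r-1) : ℝ) := by positivity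
  have hcardR : (X.card : ℝ) ≤ (D.card : ℝ) * ((n-1).choose (r-1) : ℝ) ^ 2 := by
    exact_mod_cast hcard
  have h2 : (D.card : ℝ) * ((n-1).choose (r-1) : ℝ) ^ 2
      ≤ (ε * n ^ 2) * ((n-1).choose (r-1) : ℝ) ^ 2 := by
    apply mul_le_mul_of_nonneg_right hdiff (by positivity)
  have h3 : (ε * n ^ 2) * ((n-1).choose (r-1) : ℝ) ^ 2
      = r ^ 2 * ε * (n.choose r : ℝ) ^ 2 := by
    have hsq : ((n:ℝ) * ((n-1).choose (r-1) : ℝ)) ^ 2 = ((n.choose r : ℝ) * r) ^ 2 := by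
      rw [hncR]
    linear_combination ε * hsq
  calc (X.card : ℝ) ≤ _ := hcardR
    _ ≤ _ := h2
    _ = _ := h3
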